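/- Let d, M ≥ 1, 1 ≤ t, and let P ∈ ℝ^{(d+1)×n} be a prompt whose first t(M+1) columns consist, for each task s = 1,…,t in order, of the M example columns (x_{s,j}; y_{s,j}) followed by a query column (x_{s,q}; 0), so that column number t(M+1) is the task-t query column (x_{t,q}; 0). Consider masked linear self-attention f_MSA(P) = P + W* P · mask(P^T V* P), where [mask(A)]_{i,j} = A_{i,j}/j for i ≤ j and 0 for i > j, W* = a^{1/4}·[[0_{d×d}, 0_d],[0_d^T, 1]], V* = a^{−1/4}·[[Γ^{−1}, 0_d],[0_d^T, 0]] for any a > 0. Then the (d+1)-st coordinate of column t(M+1) of f_MSA(P) equals ŷ_{t,q} = x_{t,q}^T Γ^{−1} ( (1/(t(M+1))) Σ_{s=1}^t Σ_{j=1}^M x_{s,j} y_{s,j} ). -/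

import Mathlib

open Matrix BigOperators

/-- The decoder mask: `[mask A]_{i,j} = A_{i,j}/j` for `i ≤ j` (1-indexed `j`, i.e.
`(j+1)` for 0-indexed `Fin` columns) and `0` for `i > j`. -/
noncomputable def maskMat {n : ℕ} (A : Matrix (Fin n) (Fin n) ℝ) : Matrix (Fin n) (Fin n) ℝ :=
  Matrix.of fun i j => if (i : ℕ) ≤ (j : ℕ) then A i j / ((j : ℕ) + 1) else 0

/-- The column index (0-based) of the `j`-th column of the task-`s` block, where each
task block consists of `M` example columns followed by one query column. -/
def colIdx (M t n : ℕ) (h : t * (M + 1) ≤ n) (s : Fin t) (j : Fin (M + 1)) : Fin n :=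
  ⟨(s : ℕ) * (M + 1) + (j : ℕ), by
    calc (s : ℕ) * (M + 1) + (j : ℕ)
        < (s : ℕ) * (M + 1) + (M + 1) := Nat.add_lt_add_left j.isLt _
      _ = ((s : ℕ) + 1) * (M + 1) := by ring
      _ ≤ t * (M + 1) := Nat.mul_le_mul_right _ s.isLt
      _ ≤ n := h⟩


lemma colIdx_inj_aux (M s s' j j' : ℕ) (hj : j < M + 1) (hj' : j' < M + 1)
    (h : s * (M + 1) + j = s' * (M + 1) + j') : s = s' ∧ j = j' := by
  have hd : s = s' := by
    rcases Nat.lt_trichotomy s s' with h1 | h1 | h1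
    · exfalso
      have h2 : (s + 1) * (M + 1) ≤ s' * (M + 1) := Nat.mul_le_mul_right _ h1
      have h3 : s * (M + 1) + j < (s + 1) * (M + 1) := by
        have : s * (M + 1) + j < s * (M + 1) + (M + 1) := by omega
        calc s * (M + 1) + j < s * (M + 1) + (M + 1) := this
          _ = (s + 1) * (M + 1) := by ring
      omega
    · exact h1
    · exfalso
      have h2 : (s' + 1) * (M + 1) ≤ s * (M + 1) := Nat.mul_le_mul_right _ h1
      have h3 : s' * (M + 1) + j' < (s' + 1) * (M + 1) := by
        have : s' * (M + 1) + j' < s' * (M + 1) + (M + 1) := by omega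
        calc s' * (M + 1) + j' < s' * (M + 1) + (M + 1) := this
          _ = (s' + 1) * (M + 1) := by ring
      omega
  subst hd
  exact ⟨rfl, by omega⟩

/-- for masked linear self-attention with the trained parameters, applied
to a prompt whose first `t(M+1)` columns are, for each task `s = 1,…,t` in order, the
`M` example columns `(x_{s,j}; y_{s,j})` followed by the query column `(x_{s,q}; 0)`,
the label coordinate of column `t(M+1)` (the task-`t` query column) equals
`ŷ_{t,q} = x_{t,q}ᵀ Γ⁻¹ ((1/(t(M+1))) Σ_{s=1}^t Σ_{j=1}^M x_{s,j} y_{s,j})`. -/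
theorem stmt_1 (d M t n : ℕ) (hd : 1 ≤ d) (hM : 1 ≤ M) (ht : 1 ≤ t)
    (hn : t * (M + 1) ≤ n)
    (N : ℝ) (hN : 0 < N)
    (Λ : Matrix (Fin d) (Fin d) ℝ) (hΛsym : Λ.IsSymm) (hΛpd : Λ.PosDef)
    (Γ : Matrix (Fin d) (Fin d) ℝ)
    (hΓ : Γ = (1 + 1 / N) • Λ + (Λ.trace / N) • (1 : Matrix (Fin d) (Fin d) ℝ))
    (a : ℝ) (ha : 0 < a)
    (x : Fin t → Fin M → Fin d → ℝ) (y : Fin t → Fin M → ℝ)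
    (xsq : Fin t → Fin d → ℝ)
    (P : Matrix (Fin d ⊕ Unit) (Fin n) ℝ)
    (hPex : ∀ (s : Fin t) (j : Fin M),
        (∀ k, P (Sum.inl k) (colIdx M t n hn s j.castSucc) = x s j k)
          ∧ P (Sum.inr ()) (colIdx M t n hn s j.castSucc) = y s j)
    (hPq : ∀ s : Fin t,
        (∀ k, P (Sum.inl k) (colIdx M t n hn s (Fin.last M)) = xsq s k)
          ∧ P (Sum.inr ()) (colIdx M t n hn s (Fin.last M)) = 0)
    (Wstar Vstar : Matrix (Fin d ⊕ Unit) (Fin d ⊕ Unit) ℝ)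
    (hW : Wstar = a ^ ((1 : ℝ) / 4) •
        fromBlocks (0 : Matrix (Fin d) (Fin d) ℝ) 0 0 (1 : Matrix Unit Unit ℝ))
    (hV : Vstar = a ^ (-(1 : ℝ) / 4) •
        fromBlocks Γ⁻¹ 0 0 (0 : Matrix Unit Unit ℝ))
    (out : Matrix (Fin d ⊕ Unit) (Fin n) ℝ)
    (hout : out = P + Wstar * P * maskMat (Pᵀ * Vstar * P))
    (tl : Fin t) (htl : (tl : ℕ) = t - 1) :
    out (Sum.inr ()) (colIdx M t n hn tl (Fin.last M))
      = xsq tl ⬝ᵥ (Γ⁻¹ *ᵥ ((1 / ((t : ℝ) * ((M : ℝ) + 1))) • ∑ s, ∑ j, y s j • x s j)) := by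

  have hΓsym : Γᵀ = Γ := by
    rw [hΓ]; simp [Matrix.transpose_add, Matrix.transpose_smul, hΛsym.eq]
  have hΓisym : (Γ⁻¹)ᵀ = Γ⁻¹ := by
    rw [Matrix.transpose_nonsing_inv, hΓsym]
  set q := colIdx M t n hn tl (Fin.last M) with hqdef
  have hqval : (q : ℕ) = (t - 1) * (M + 1) + M := by
    have : (q : ℕ) = (tl : ℕ) * (M + 1) + M := rfl
    rw [this, htl]
  have hq1 : ((q : ℕ) : ℝ) + 1 = (t : ℝ) * ((M : ℝ) + 1) := by
    have : (q : ℕ) + 1 = t * (M + 1) := by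
      rw [hqval, add_assoc]
      have h1 : (t - 1) + 1 = t := Nat.succ_pred_eq_of_pos ht
      calc (t - 1) * (M + 1) + (M + 1) = ((t - 1) + 1) * (M + 1) := by ring
        _ = t * (M + 1) := by rw [h1]
    have := congrArg (fun m : ℕ => (m : ℝ)) this
    push_cast at this ⊢
    linarith
  have hP0 : P (Sum.inr ()) q = 0 := (hPq tl).2
  have hWP : ∀ c, (Wstar * P) (Sum.inr ()) c = a ^ ((1:ℝ)/4) * P (Sum.inr ()) c := by
    intro c
    rw [hW]
    simp [Matrix.mul_apply, Fintype.sum_sum_type]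
  have hA : ∀ c, (Pᵀ * Vstar * P) c q
      = ∑ k, ∑ l, P (Sum.inl k) c * (a ^ (-(1:ℝ)/4) * Γ⁻¹ k l) * xsq tl l := by
    intro c
    rw [hV]
    simp [Matrix.mul_apply, Fintype.sum_sum_type, Finset.sum_mul, (hPq tl).1, hqdef,
      mul_assoc, mul_comm, mul_left_comm, Finset.mul_sum]
    rw [Finset.sum_comm]
  have hqn : (q : ℕ) + 1 = t * (M + 1) := by
    rw [hqval, add_assoc]
    have h1 : (t - 1) + 1 = t := Nat.succ_pred_eq_of_pos ht
    calc (t - 1) * (M + 1) + (M + 1) = ((t - 1) + 1) * (M + 1) := by ring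
      _ = t * (M + 1) := by rw [h1]
  have hPq1 : ∀ (s : Fin t) k, P (Sum.inl k) (colIdx M t n hn s (Fin.last M)) = xsq s k :=
    fun s => (hPq s).1
  have hPq2 : ∀ s : Fin t, P (Sum.inr ()) (colIdx M t n hn s (Fin.last M)) = 0 :=
    fun s => (hPq s).2
  have hPex1 : ∀ (s : Fin t) (j : Fin M) k,
      P (Sum.inl k) (colIdx M t n hn s j.castSucc) = x s j k := fun s j => (hPex s j).1
  have hPex2 : ∀ (s : Fin t) (j : Fin M),
      P (Sum.inr ()) (colIdx M t n hn s j.castSucc) = y s j := fun s j => (hPex s j).2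
  have himg : Finset.univ.filter (fun c : Fin n => (c : ℕ) ≤ (q : ℕ)) =
      Finset.univ.image (fun p : Fin t × Fin (M + 1) => colIdx M t n hn p.1 p.2) := by
    ext c
    simp only [Finset.mem_filter, Finset.mem_univ, true_and, Finset.mem_image, Prod.exists]
    constructor
    · intro hc
      have hc' : (c : ℕ) < t * (M + 1) := by omega
      have hs : (c : ℕ) / (M + 1) < t := (Nat.div_lt_iff_lt_mul (by omega)).2 hc'
      refine ⟨⟨(c : ℕ) / (M + 1), hs⟩, ⟨(c : ℕ) % (M + 1), Nat.mod_lt _ (by omega)⟩, ?_⟩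
      apply Fin.ext
      show (c : ℕ) / (M + 1) * (M + 1) + (c : ℕ) % (M + 1) = (c : ℕ)
      exact Nat.div_add_mod' _ _
    · rintro ⟨s, j, rfl⟩
      show (s : ℕ) * (M + 1) + (j : ℕ) ≤ (q : ℕ)
      rw [hqval]
      have hs : (s : ℕ) ≤ t - 1 := by have := s.isLt; omega
      exact add_le_add (Nat.mul_le_mul_right _ hs) (by have := j.isLt; omega)
  have hinj : ∀ p ∈ (Finset.univ : Finset (Fin t × Fin (M + 1))),
      ∀ p' ∈ (Finset.univ : Finset (Fin t × Fin (M + 1))),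
      colIdx M t n hn p.1 p.2 = colIdx M t n hn p'.1 p'.2 → p = p' := by
    rintro ⟨s, j⟩ - ⟨s', j'⟩ - h
    have h' : (s : ℕ) * (M + 1) + (j : ℕ) = (s' : ℕ) * (M + 1) + (j' : ℕ) :=
      congrArg Fin.val h
    obtain ⟨h1, h2⟩ := colIdx_inj_aux M _ _ _ _ j.isLt j'.isLt h'
    exact Prod.ext (Fin.ext h1) (Fin.ext h2)
  rw [hout, Matrix.add_apply, Matrix.mul_apply]
  rw [show P (Sum.inr ()) (colIdx M t n hn tl (Fin.last M)) = 0 from hP0, zero_add]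
  simp only [maskMat, Matrix.of_apply]
  simp_rw [hWP, hA, mul_ite, mul_zero]
  rw [← Finset.sum_filter, himg, Finset.sum_image hinj, Fintype.sum_prod_type]
  simp_rw [Fin.sum_univ_castSucc, hPq2, hPex2, hPex1, hPq1, mul_zero, zero_mul, add_zero]
  rw [hq1]
  have hsym' : ∀ k l : Fin d, Γ⁻¹ l k = Γ⁻¹ k l := fun k l =>
    (Matrix.transpose_apply Γ⁻¹ k l).symm.trans (congrFun (congrFun hΓisym k) l)
  have hb : a ^ ((1:ℝ)/4) * a ^ (-(1:ℝ)/4) = 1 := by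
    rw [← Real.rpow_add ha]; norm_num
  set C := (t:ℝ) * ((M:ℝ) + 1) with hC
  set u : Fin d → ℝ := fun k => ∑ l, Γ⁻¹ k l * xsq tl l with hu
  have hrhs : xsq tl ⬝ᵥ Γ⁻¹ *ᵥ (1/C) • (∑ s, ∑ j, y s j • x s j)
      = ∑ k, ((1/C) * ∑ s, ∑ j, y s j * x s j k) * u k := by
    simp only [dotProduct, Matrix.mulVec, dotProduct, Pi.smul_apply, Finset.sum_apply,
      smul_eq_mul, hu, Finset.mul_sum, Finset.sum_mul]
    rw [Finset.sum_comm]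
    refine Finset.sum_congr rfl fun k _ => ?_
    refine Finset.sum_congr rfl fun l _ => Finset.sum_congr rfl fun s' _ =>
      Finset.sum_congr rfl fun j _ => ?_
    rw [hsym' k l]; ring
  rw [hrhs]
  have hlhs : ∀ (s : Fin t) (j : Fin M),
      (∑ k, ∑ l, x s j k * (a ^ (-(1:ℝ)/4) * Γ⁻¹ k l) * xsq tl l)
        = a ^ (-(1:ℝ)/4) * ∑ k, x s j k * u k := by
    intro s j
    rw [Finset.mul_sum]
    refine Finset.sum_congr rfl fun k _ => ?_
    simp only [hu, Finset.mul_sum]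
    exact Finset.sum_congr rfl fun l _ => by ring
  simp_rw [hlhs]
  simp only [Finset.mul_sum, Finset.sum_mul, Finset.sum_div, mul_div_assoc]
  rw [show (∑ s' : Fin t, ∑ j : Fin M, ∑ k : Fin d,
        a ^ ((1:ℝ)/4) * y s' j * (a ^ (-(1:ℝ)/4) * (x s' j k * (u k / C))))
      = ∑ k : Fin d, ∑ s' : Fin t, ∑ j : Fin M,
        a ^ ((1:ℝ)/4) * y s' j * (a ^ (-(1:ℝ)/4) * (x s' j k * (u k / C))) from by
    exact (Finset.sum_congr rfl fun s'' _ => Finset.sum_comm).trans Finset.sum_comm]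
  refine Finset.sum_congr rfl fun k _ => Finset.sum_congr rfl fun s' _ =>
    Finset.sum_congr rfl fun j _ => ?_
  have hC0 : C ≠ 0 := by
    rw [hC]; positivity
  field_simp
  rw [show (-(1:ℝ)/4) = -(1/4) by norm_num] at hb
  linear_combination (y s' j * x s' j k * u k) * hb
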